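/- Under the stated structure assumptions, there exists a constant c₂ > 0, depending only on n, s(G), s(H_a), s(H_b) and ν, such that for all x ∈ Ω, y ∈ ℝ and z₁, z₂ ∈ ℝⁿ∖{0}: |V_G(z₁) − V_G(z₂)|² + a(x)·|V_{H_a}(z₁) − V_{H_a}(z₂)|² + b(x)·|V_{H_b}(z₁) − V_{H_b}(z₂)|² + c₂·⟨D_zF(x,y,z₁), z₂ − z₁⟩ ≤ c₂·( F(x,y,z₂) − F(x,y,z₁) ), where ⟨·,·⟩ is the Euclidean inner product. -/

import Mathlib

open Real Set Filter MeasureTheory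
open scoped RealInnerProductSpace

/-- An N-function with index `s ≥ 1`: a function `Φ : [0,∞) → [0,∞)` with `Φ(0) = 0`,
strictly increasing and convex, `Φ(t)/t → 0` as `t → 0⁺`, `Φ(t)/t → ∞` as `t → ∞`,
continuously differentiable on `[0,∞)`, twice continuously differentiable on `(0,∞)`,
and `Φ'(t) > 0` with `(1/s)·Φ'(t) ≤ t·Φ''(t) ≤ s·Φ'(t)` for every `t > 0`. -/
structure IsNFunction (Φ : ℝ → ℝ) (s : ℝ) : Prop where
  s_ge_one : 1 ≤ s
  nonneg : ∀ t, 0 ≤ t → 0 ≤ Φ t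
  zero : Φ 0 = 0
  strictMonoOn : StrictMonoOn Φ (Ici 0)
  convexOn : ConvexOn ℝ (Ici 0) Φ
  tendsto_zero : Tendsto (fun t => Φ t / t) (nhdsWithin 0 (Ioi 0)) (nhds 0)
  tendsto_atTop : Tendsto (fun t => Φ t / t) atTop atTop
  contDiffOn_one : ContDiffOn ℝ 1 Φ (Ici 0)
  contDiffOn_two : ContDiffOn ℝ 2 Φ (Ioi 0)
  deriv_pos : ∀ t, 0 < t → 0 < deriv Φ t
  index_lower : ∀ t, 0 < t → (1 / s) * deriv Φ t ≤ t * deriv (deriv Φ) t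
  index_upper : ∀ t, 0 < t → t * deriv (deriv Φ) t ≤ s * deriv Φ t


namespace IsNFunction
variable {Φ : ℝ → ℝ} {s : ℝ}

lemma hd1 (h : IsNFunction Φ s) {t : ℝ} (ht : 0 < t) :
    HasDerivAt Φ (deriv Φ t) t := by
  have : DifferentiableAt ℝ Φ t :=
    (h.contDiffOn_two.differentiableOn (by norm_num)).differentiableAt
      (Ioi_mem_nhds ht)
  exact this.hasDerivAt

lemma contDiffOn_deriv (h : IsNFunction Φ s) :
    ContDiffOn ℝ 1 (deriv Φ) (Ioi 0) := by
  exact h.contDiffOn_two.deriv_of_isOpen (m := 1) isOpen_Ioi (by norm_num)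

lemma hd2 (h : IsNFunction Φ s) {t : ℝ} (ht : 0 < t) :
    HasDerivAt (deriv Φ) (deriv (deriv Φ) t) t := by
  have : DifferentiableAt ℝ (deriv Φ) t :=
    ((h.contDiffOn_deriv).differentiableOn (by norm_num)).differentiableAt
      (Ioi_mem_nhds ht)
  exact this.hasDerivAt

lemma cont_deriv (h : IsNFunction Φ s) : ContinuousOn (deriv Φ) (Ioi 0) :=
  h.contDiffOn_deriv.continuousOn

/-- second derivative is positive -/
lemma dd_pos (h : IsNFunction Φ s) {t : ℝ} (ht : 0 < t) :
    0 < deriv (deriv Φ) t := by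
  have h1 := h.index_lower t ht
  have h2 := h.deriv_pos t ht
  have hs : (0:ℝ) < s := lt_of_lt_of_le one_pos h.s_ge_one
  have h3 : 0 < 1 / s * deriv Φ t := by positivity
  have h4 : 0 < t * deriv (deriv Φ) t := lt_of_lt_of_le h3 h1
  by_contra hc
  push_neg at hc
  nlinarith

/-- Φ' is monotone on (0,∞) -/
lemma deriv_mono (h : IsNFunction Φ s) {r R : ℝ} (hr : 0 < r) (hrR : r ≤ R) :
    deriv Φ r ≤ deriv Φ R := by
  rcases eq_or_lt_of_le hrR with rfl | hlt
  · exact le_refl _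
  have : StrictMonoOn (deriv Φ) (Ioi 0) := by
    apply strictMonoOn_of_deriv_pos (convex_Ioi 0) (h.cont_deriv)
    intro x hx
    rw [interior_Ioi] at hx
    exact h.dd_pos hx
  exact (this (mem_Ioi.2 hr) (mem_Ioi.2 (lt_of_lt_of_le hr hrR)) hlt).le


/-- doubling-type estimate: `Φ'(R) ≤ (R/r)^s Φ'(r)` for `0 < r ≤ R`. -/
lemma deriv_ratio (h : IsNFunction Φ s) {r R : ℝ} (hr : 0 < r) (hrR : r ≤ R) :
    deriv Φ R ≤ (R / r) ^ s * deriv Φ r := by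
  have hR : 0 < R := lt_of_lt_of_le hr hrR
  have hs : (0:ℝ) < s := lt_of_lt_of_le one_pos h.s_ge_one
  set w : ℝ → ℝ := fun t => s * Real.log t - Real.log (deriv Φ t) with hw
  have hwd : ∀ t, 0 < t → HasDerivAt w (s / t - deriv (deriv Φ) t / deriv Φ t) t := by
    intro t ht
    have h1 : HasDerivAt (fun u => s * Real.log u) (s * t⁻¹) t :=
      (Real.hasDerivAt_log (ne_of_gt ht)).const_mul s
    have h2 : HasDerivAt (fun u => Real.log (deriv Φ u))
        (deriv (deriv Φ) t / deriv Φ t) t := by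
      have := (h.hd2 ht).log (ne_of_gt (h.deriv_pos t ht))
      simpa using this
    have e : s / t - deriv (deriv Φ) t / deriv Φ t = s * t⁻¹ - deriv (deriv Φ) t / deriv Φ t := by
      rw [div_eq_mul_inv]
    rw [e]
    exact h1.sub h2
  have hmono : MonotoneOn w (Ioi 0) := by
    apply monotoneOn_of_deriv_nonneg (convex_Ioi 0)
    · intro t ht
      exact ((hwd t ht).differentiableAt).continuousAt.continuousWithinAt
    · intro t ht
      rw [interior_Ioi] at ht
      exact ((hwd t ht).differentiableAt).differentiableWithinAt
    · intro t ht
      rw [interior_Ioi] at ht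
      rw [(hwd t ht).deriv]
      rw [sub_nonneg, div_le_div_iff₀ (h.deriv_pos t ht) ht]
      have := h.index_upper t ht
      nlinarith [h.deriv_pos t ht]
  have hkey := hmono (mem_Ioi.2 hr) (mem_Ioi.2 hR) hrR
  have hlog : Real.log (deriv Φ R) ≤ s * (Real.log R - Real.log r)
      + Real.log (deriv Φ r) := by
    simp only [hw] at hkey; linarith
  have hexp := Real.exp_le_exp.2 hlog
  rw [Real.exp_log (h.deriv_pos R hR)] at hexp
  rw [Real.exp_add, Real.exp_log (h.deriv_pos r hr)] at hexp
  have : Real.exp (s * (Real.log R - Real.log r)) = (R / r) ^ s := by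
    rw [Real.rpow_def_of_pos (div_pos hR hr), Real.log_div (ne_of_gt hR) (ne_of_gt hr),
      mul_comm]
  rwa [this] at hexp

lemma phi_le (h : IsNFunction Φ s) {t : ℝ} (ht : 0 < t) :
    Φ t ≤ t * deriv Φ t := by
  obtain ⟨c, hc, hceq⟩ := exists_deriv_eq_slope Φ ht
    (h.contDiffOn_one.continuousOn.mono (by intro x hx; exact hx.1))
    (fun x hx => ((h.hd1 hx.1).differentiableAt).differentiableWithinAt)
  have h1 : deriv Φ c ≤ deriv Φ t := h.deriv_mono hc.1 hc.2.le
  rw [hceq] at h1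
  rw [h.zero, sub_zero, sub_zero, div_le_iff₀ ht] at h1
  linarith [h1]

lemma phi_ge (h : IsNFunction Φ s) {t : ℝ} (ht : 0 < t) :
    (t / 2) * (((2:ℝ) ^ s)⁻¹ * deriv Φ t) ≤ Φ t := by
  have ht2 : 0 < t / 2 := by linarith
  have hB : (0:ℝ) < (2:ℝ) ^ s := Real.rpow_pos_of_pos two_pos s
  obtain ⟨c, hc, hceq⟩ := exists_deriv_eq_slope Φ (by linarith : t / 2 < t)
    (h.contDiffOn_one.continuousOn.mono (by intro x hx; exact le_trans ht2.le hx.1))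
    (fun x hx => ((h.hd1 (lt_trans ht2 hx.1)).differentiableAt).differentiableWithinAt)
  have hc1 : deriv Φ (t/2) ≤ deriv Φ c := h.deriv_mono ht2 hc.1.le
  have hc2 : deriv Φ t ≤ (t / (t/2)) ^ s * deriv Φ (t/2) := h.deriv_ratio ht2 (by linarith)
  have hq : (t / (t/2) : ℝ) = 2 := by field_simp
  rw [hq] at hc2
  have hΦhalf : 0 ≤ Φ (t/2) := h.nonneg _ ht2.le
  have hslope : Φ t - Φ (t/2) = (t/2) * deriv Φ c := by
    rw [hceq]
    have : t - t / 2 = t / 2 := by ring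
    rw [this, mul_div_cancel₀ _ (ne_of_gt ht2)]
  have h3 : ((2:ℝ) ^ s)⁻¹ * deriv Φ t ≤ deriv Φ c := by
    rw [inv_mul_le_iff₀ hB, mul_comm]
    exact le_trans hc2 (by nlinarith)
  nlinarith [mul_le_mul_of_nonneg_left h3 ht2.le]

end IsNFunction

/-- `V_Φ(z) := (Φ'(|z|)/|z|)^{1/2} · z` (equal to `0` at `z = 0`). -/
noncomputable def VPhi {n : ℕ} (Φ : ℝ → ℝ) (z : EuclideanSpace ℝ (Fin n)) :
    EuclideanSpace ℝ (Fin n) :=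
  ((deriv Φ ‖z‖ / ‖z‖) ^ ((1 : ℝ) / 2)) • z


lemma sq_rpow_half {x : ℝ} (hx : 0 ≤ x) : (x ^ ((1:ℝ)/2)) ^ 2 = x := by
  rw [← Real.rpow_natCast (x ^ ((1:ℝ)/2)) 2, ← Real.rpow_mul hx]
  norm_num


lemma aux_sq_add {a b X : ℝ} (hX : 0 ≤ X) (h : X ≤ a + b) :
    X ^ 2 ≤ 2 * a ^ 2 + 2 * b ^ 2 := by nlinarith [sq_nonneg (a - b), sq_nonneg (a + b)]

lemma aux_sq3 {M d : ℝ} (h0 : 0 ≤ M) (h : M ≤ 3 * d) : M ^ 2 ≤ 9 * d ^ 2 := by nlinarith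

lemma aux_sq4 {M c : ℝ} (h0 : 0 ≤ M) (h : M ≤ 4 * c) : M ^ 2 ≤ 16 * c ^ 2 := by nlinarith

lemma aux_le_of_sq {a b : ℝ} (ha : 0 ≤ a) (hb : 0 ≤ b) (h : a ^ 2 ≤ b ^ 2) : a ≤ b := by
  nlinarith

lemma aux_num {s p q : ℝ} (hs : 1 ≤ s) (hp : 0 < p) (h1 : q ≤ s * p)
    (h2 : 1 / s * p ≤ q) : |q - p * 1| ≤ s * p := by
  have hs0 : (0:ℝ) < s := lt_of_lt_of_le one_pos hs
  have hq0 : 0 ≤ q := le_trans (by positivity) h2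
  rw [abs_le, mul_one]
  constructor <;> nlinarith

set_option maxHeartbeats 1000000 in
/-- Step D, pure real-arithmetic core. -/
lemma Vdiff_real {Φ : ℝ → ℝ} {s : ℝ} (h : IsNFunction Φ s) {r₁ r₂ d X : ℝ}
    (hr₁ : 0 < r₁) (hr₂ : 0 < r₂) (hord : r₂ ≤ r₁) (hd0 : 0 ≤ d)
    (hlow : r₁ - r₂ ≤ d) (hX : 0 ≤ X)
    (hb1 : X ≤ (deriv Φ r₁ / r₁) ^ ((1:ℝ)/2) * r₁ + (deriv Φ r₂ / r₂) ^ ((1:ℝ)/2) * r₂)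
    (hb2 : X ≤ |(deriv Φ r₁ / r₁) ^ ((1:ℝ)/2) - (deriv Φ r₂ / r₂) ^ ((1:ℝ)/2)| * r₁
      + (deriv Φ r₂ / r₂) ^ ((1:ℝ)/2) * d) :
    X ^ 2 ≤ ((16 * s + 2) ^ 2 * (2:ℝ) ^ s + 36) *
      (deriv Φ (r₁ + r₂) / (r₁ + r₂)) * d ^ 2 := by
  have hs1 : (1:ℝ) ≤ s := h.s_ge_one
  have hs0 : (0:ℝ) < s := lt_of_lt_of_le one_pos hs1
  set M := r₁ + r₂ with hMdef
  have hM : 0 < M := by positivity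
  have hdM : 0 < deriv Φ M := h.deriv_pos M hM
  set A := deriv Φ M / M with hAdef
  have hA : 0 < A := div_pos hdM hM
  have hAM : A * M = deriv Φ M := by rw [hAdef, div_mul_cancel₀ _ (ne_of_gt hM)]
  set B := (2:ℝ) ^ s with hBdef
  have hB1 : (1:ℝ) ≤ B := Real.one_le_rpow one_le_two hs0.le
  have hB : (0:ℝ) < B := lt_of_lt_of_le one_pos hB1
  set ψ₁ := (deriv Φ r₁ / r₁) ^ ((1:ℝ)/2) with hψ₁def
  set ψ₂ := (deriv Φ r₂ / r₂) ^ ((1:ℝ)/2) with hψ₂def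
  have hq₁pos : 0 < deriv Φ r₁ / r₁ := div_pos (h.deriv_pos _ hr₁) hr₁
  have hq₂pos : 0 < deriv Φ r₂ / r₂ := div_pos (h.deriv_pos _ hr₂) hr₂
  have hψ₁pos : 0 < ψ₁ := Real.rpow_pos_of_pos hq₁pos _
  have hψ₂pos : 0 < ψ₂ := Real.rpow_pos_of_pos hq₂pos _
  have hψ₁sq : ψ₁ ^ 2 = deriv Φ r₁ / r₁ := sq_rpow_half hq₁pos.le
  have hψ₂sq : ψ₂ ^ 2 = deriv Φ r₂ / r₂ := sq_rpow_half hq₂pos.le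
  have hr₁M : r₁ ≤ M := by simp only [hMdef]; linarith
  have hr₂M : r₂ ≤ M := by simp only [hMdef]; linarith
  have hd₁M : deriv Φ r₁ ≤ deriv Φ M := h.deriv_mono hr₁ hr₁M
  have hd₂M : deriv Φ r₂ ≤ deriv Φ M := h.deriv_mono hr₂ hr₂M
  have hψ₁r : (ψ₁ * r₁) ^ 2 = deriv Φ r₁ * r₁ := by
    rw [mul_pow, hψ₁sq, div_mul_eq_mul_div, pow_two, ← mul_assoc,
      mul_div_assoc, div_self (ne_of_gt hr₁), mul_one]
  have hψ₂r : (ψ₂ * r₂) ^ 2 = deriv Φ r₂ * r₂ := by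
    rw [mul_pow, hψ₂sq, div_mul_eq_mul_div, pow_two, ← mul_assoc,
      mul_div_assoc, div_self (ne_of_gt hr₂), mul_one]
  by_cases hcase : r₂ ≤ r₁ / 2
  · -- Case 1 : far apart
    have hΔlarge : r₁ / 2 ≤ d := by linarith
    have hM3 : M ≤ 3 * d := by simp only [hMdef]; linarith
    have hAM2 : A * M ^ 2 = deriv Φ M * M := by rw [pow_two, ← mul_assoc, hAM]
    have hb₁ : deriv Φ r₁ * r₁ ≤ A * M ^ 2 := by
      rw [hAM2]; exact mul_le_mul hd₁M hr₁M hr₁.le hdM.le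
    have hb₂ : deriv Φ r₂ * r₂ ≤ A * M ^ 2 := by
      rw [hAM2]; exact mul_le_mul hd₂M hr₂M hr₂.le hdM.le
    have htri : X ^ 2 ≤ 2 * (ψ₁ * r₁) ^ 2 + 2 * (ψ₂ * r₂) ^ 2 :=
      aux_sq_add hX hb1
    have hM2 : M ^ 2 ≤ 9 * d ^ 2 := aux_sq3 hM.le hM3
    have hmain : X ^ 2 ≤ 36 * A * d ^ 2 := by
      have e1 : A * M ^ 2 ≤ A * (9 * d ^ 2) := mul_le_mul_of_nonneg_left hM2 hA.le
      calc X ^ 2 ≤ 2 * (ψ₁ * r₁) ^ 2 + 2 * (ψ₂ * r₂) ^ 2 := htri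
      _ ≤ 4 * (A * M ^ 2) := by rw [hψ₁r, hψ₂r]; linarith
      _ ≤ 4 * (A * (9 * d ^ 2)) := by linarith
      _ = 36 * A * d ^ 2 := by ring
    have hrest : (0:ℝ) ≤ (16 * s + 2) ^ 2 * B * A * d ^ 2 := by positivity
    calc X ^ 2 ≤ 36 * A * d ^ 2 := hmain
    _ ≤ ((16 * s + 2) ^ 2 * B + 36) * A * d ^ 2 := by
        have e : ((16 * s + 2) ^ 2 * B + 36) * A * d ^ 2
            = (16 * s + 2) ^ 2 * B * A * d ^ 2 + 36 * A * d ^ 2 := by ring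
        linarith
  · -- Case 2 : comparable
    push_neg at hcase
    have hr₁M2 : M ≤ 2 * r₁ := by simp only [hMdef]; linarith
    have hr₂M4 : M ≤ 4 * r₂ := by simp only [hMdef]; linarith
    set SA := Real.sqrt (A * B) with hSAdef
    have hSA : 0 < SA := Real.sqrt_pos.2 (by positivity)
    have hSAsq : SA ^ 2 = A * B := Real.sq_sqrt (by positivity)
    set SL := Real.sqrt (A / B) with hSLdef
    have hSL : 0 < SL := Real.sqrt_pos.2 (by positivity)
    have hSLsq : SL ^ 2 = A / B := Real.sq_sqrt (by positivity)
    have hprod : SA * SL = A := by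
      rw [hSAdef, hSLdef, ← Real.sqrt_mul (by positivity)]
      have e : A * B * (A / B) = A ^ 2 := by field_simp
      rw [e, Real.sqrt_sq hA.le]
    have hψ₂le : ψ₂ ≤ 2 * SA := by
      have hABle : deriv Φ r₂ / r₂ ≤ 4 * (A * B) := by
        rw [div_le_iff₀ hr₂]
        have e1 : deriv Φ r₂ ≤ A * M := by rw [hAM]; exact hd₂M
        have e2 : A * M ≤ A * (4 * r₂) := mul_le_mul_of_nonneg_left hr₂M4 hA.le
        have e3 : A * (4 * r₂) ≤ (A * B) * (4 * r₂) :=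
          mul_le_mul_of_nonneg_right (le_mul_of_one_le_right hA.le hB1)
            (by positivity)
        linarith
      have h4 : ψ₂ ^ 2 ≤ (2 * SA) ^ 2 := by
        rw [hψ₂sq, mul_pow, hSAsq]; linarith
      exact aux_le_of_sq hψ₂pos.le (by positivity) h4
    have hψ₁low : A / B ≤ ψ₁ ^ 2 := by
      rw [hψ₁sq]
      have hratio : deriv Φ M ≤ B * deriv Φ r₁ := by
        have hrat := h.deriv_ratio hr₁ hr₁M
        have hble : (M / r₁ : ℝ) ^ s ≤ B := by
          rw [hBdef]
          apply Real.rpow_le_rpow (by positivity) _ hs0.le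
          rw [div_le_iff₀ hr₁]; linarith
        calc deriv Φ M ≤ (M / r₁) ^ s * deriv Φ r₁ := hrat
        _ ≤ B * deriv Φ r₁ := mul_le_mul_of_nonneg_right hble (h.deriv_pos r₁ hr₁).le
      rw [div_le_div_iff₀ hB hr₁]
      calc A * r₁ ≤ A * M := mul_le_mul_of_nonneg_left hr₁M hA.le
      _ = deriv Φ M := hAM
      _ ≤ B * deriv Φ r₁ := hratio
      _ = deriv Φ r₁ * B := mul_comm _ _
    have hψ₁SL : SL ≤ ψ₁ := by
      have := Real.sqrt_le_sqrt hψ₁low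
      rwa [← hSLdef, Real.sqrt_sq hψ₁pos.le] at this
    -- MVT estimate for q = Φ'/id
    have hqbound : |deriv Φ r₁ / r₁ - deriv Φ r₂ / r₂| ≤ 16 * s * A / M * d := by
      have habs : |r₁ - r₂| ≤ d := by
        rw [abs_of_nonneg (by linarith : (0:ℝ) ≤ r₁ - r₂)]; exact hlow
      have hrhs0 : (0:ℝ) ≤ 16 * s * A / M := by positivity
      rcases eq_or_lt_of_le hord with heq | hlt
      · rw [heq, sub_self, abs_zero]
        positivity
      · obtain ⟨c, hc, hceq⟩ := exists_deriv_eq_slope (fun t => deriv Φ t / t) hlt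
          (by
            apply ContinuousOn.div
            · exact h.cont_deriv.mono (fun x hx => lt_of_lt_of_le hr₂ hx.1)
            · exact continuousOn_id
            · intro x hx
              exact ne_of_gt (lt_of_lt_of_le hr₂ hx.1))
          (by
            intro x hx
            have hx0 : 0 < x := lt_trans hr₂ hx.1
            exact (((h.hd2 hx0).div (hasDerivAt_id x)
              (ne_of_gt hx0)).differentiableAt).differentiableWithinAt)
        have hc0 : 0 < c := lt_trans hr₂ hc.1
        have hcM4 : M ≤ 4 * c := by linarith [hc.1, hr₂M4]
        have hcM : c ≤ M := le_trans hc.2.le hr₁M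
        have hder : deriv (fun t => deriv Φ t / t) c
            = (deriv (deriv Φ) c * c - deriv Φ c * 1) / c ^ 2 :=
          ((h.hd2 hc0).div (hasDerivAt_id c) (ne_of_gt hc0)).deriv
        have hnum : |deriv (deriv Φ) c * c - deriv Φ c * 1| ≤ s * deriv Φ c := by
          have i1 := h.index_upper c hc0
          have i2 := h.index_lower c hc0
          have i3 := h.deriv_pos c hc0
          have := aux_num hs1 i3 (by linarith [i1] : deriv (deriv Φ) c * c ≤ s * deriv Φ c)
            (by linarith [i2] : 1 / s * deriv Φ c ≤ deriv (deriv Φ) c * c)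
          exact this
        have hdcM : deriv Φ c ≤ deriv Φ M := h.deriv_mono hc0 hcM
        have hderbound : |deriv (fun t => deriv Φ t / t) c| ≤ 16 * s * A / M := by
          rw [hder, abs_div, abs_of_pos (by positivity : (0:ℝ) < c ^ 2)]
          rw [div_le_div_iff₀ (by positivity) hM]
          have e1 : |deriv (deriv Φ) c * c - deriv Φ c * 1| * M ≤ s * deriv Φ c * M :=
            mul_le_mul_of_nonneg_right hnum hM.le
          have e2 : s * deriv Φ c * M ≤ s * deriv Φ M * M := by
            have := mul_le_mul_of_nonneg_right
              (mul_le_mul_of_nonneg_left hdcM hs0.le) hM.le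
            linarith
          have e3 : s * deriv Φ M * M = s * A * M ^ 2 := by rw [← hAM]; ring
          have e4 : M ^ 2 ≤ 16 * c ^ 2 := aux_sq4 hM.le hcM4
          have e5 : s * A * M ^ 2 ≤ s * A * (16 * c ^ 2) :=
            mul_le_mul_of_nonneg_left e4 (by positivity)
          have e6 : s * A * (16 * c ^ 2) = 16 * s * A * c ^ 2 := by ring
          linarith
        have hslope : deriv Φ r₁ / r₁ - deriv Φ r₂ / r₂
            = deriv (fun t => deriv Φ t / t) c * (r₁ - r₂) := by
          rw [hceq]
          exact (div_mul_cancel₀ _ (ne_of_gt (by linarith : (0:ℝ) < r₁ - r₂))).symm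
        rw [hslope, abs_mul]
        calc |deriv (fun t => deriv Φ t / t) c| * |r₁ - r₂|
            ≤ (16 * s * A / M) * |r₁ - r₂| :=
              mul_le_mul_of_nonneg_right hderbound (abs_nonneg _)
        _ ≤ (16 * s * A / M) * d := mul_le_mul_of_nonneg_left habs hrhs0
    -- from q-bound to ψ-difference bound
    have hψd : |ψ₁ - ψ₂| * SL ≤ |deriv Φ r₁ / r₁ - deriv Φ r₂ / r₂| := by
      have e1 : |ψ₁ - ψ₂| * (ψ₁ + ψ₂) = |deriv Φ r₁ / r₁ - deriv Φ r₂ / r₂| := by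
        rw [← hψ₁sq, ← hψ₂sq, show ψ₁ ^ 2 - ψ₂ ^ 2 = (ψ₁ - ψ₂) * (ψ₁ + ψ₂) by ring,
          abs_mul, abs_of_pos (by linarith : (0:ℝ) < ψ₁ + ψ₂)]
      have e2 : |ψ₁ - ψ₂| * SL ≤ |ψ₁ - ψ₂| * (ψ₁ + ψ₂) := by
        apply mul_le_mul_of_nonneg_left _ (abs_nonneg _)
        linarith [hψ₁SL, hψ₂pos]
      linarith [e1 ▸ e2]
    have hbound1 : |ψ₁ - ψ₂| * r₁ ≤ 16 * s * SA * d := by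
      have e1 : |ψ₁ - ψ₂| * r₁ * SL ≤ (16 * s * A / M * d) * M := by
        calc |ψ₁ - ψ₂| * r₁ * SL = (|ψ₁ - ψ₂| * SL) * r₁ := by ring
        _ ≤ (16 * s * A / M * d) * M := by
            apply mul_le_mul (le_trans hψd hqbound) hr₁M hr₁.le
            positivity
      have e2 : (16 * s * A / M * d) * M = 16 * s * A * d := by
        field_simp
      have e3 : 16 * s * A * d = (16 * s * SA * d) * SL := by
        rw [show (16 * s * SA * d) * SL = 16 * s * (SA * SL) * d by ring, hprod]
      have e4 : |ψ₁ - ψ₂| * r₁ * SL ≤ (16 * s * SA * d) * SL := by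
        rw [← e3, ← e2]; exact e1
      exact le_of_mul_le_mul_right e4 hSL
    -- final assembly for case 2
    have hfinal : X ≤ (16 * s + 2) * SA * d := by
      have e1 : ψ₂ * d ≤ 2 * SA * d := mul_le_mul_of_nonneg_right hψ₂le hd0
      calc X ≤ |ψ₁ - ψ₂| * r₁ + ψ₂ * d := hb2
      _ ≤ 16 * s * SA * d + 2 * SA * d := by linarith
      _ = (16 * s + 2) * SA * d := by ring
    have hsq : X ^ 2 ≤ ((16 * s + 2) * SA * d) ^ 2 := pow_le_pow_left₀ hX hfinal 2
    calc X ^ 2 ≤ ((16 * s + 2) * SA * d) ^ 2 := hsq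
    _ = (16 * s + 2) ^ 2 * (A * B) * d ^ 2 := by rw [mul_pow, mul_pow, hSAsq]
    _ ≤ ((16 * s + 2) ^ 2 * B + 36) * A * d ^ 2 := by
        have e : ((16 * s + 2) ^ 2 * B + 36) * A * d ^ 2
            = (16 * s + 2) ^ 2 * (A * B) * d ^ 2 + 36 * (A * d ^ 2) := by ring
        have e2 : (0:ℝ) ≤ 36 * (A * d ^ 2) := by positivity
        linarith

/-- Step D, asymmetric vector version. -/
lemma Vdiff_aux {n : ℕ} {Φ : ℝ → ℝ} {s : ℝ} (h : IsNFunction Φ s)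
    (z₁ z₂ : EuclideanSpace ℝ (Fin n)) (h₁ : z₁ ≠ 0) (h₂ : z₂ ≠ 0)
    (hord : ‖z₂‖ ≤ ‖z₁‖) :
    ‖VPhi Φ z₁ - VPhi Φ z₂‖ ^ 2 ≤
      ((16 * s + 2) ^ 2 * (2:ℝ) ^ s + 36) *
        (deriv Φ (‖z₁‖ + ‖z₂‖) / (‖z₁‖ + ‖z₂‖)) * ‖z₁ - z₂‖ ^ 2 := by
  have hr₁ : 0 < ‖z₁‖ := norm_pos_iff.2 h₁
  have hr₂ : 0 < ‖z₂‖ := norm_pos_iff.2 h₂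
  set ψ₁ := (deriv Φ ‖z₁‖ / ‖z₁‖) ^ ((1:ℝ)/2) with hψ₁def
  set ψ₂ := (deriv Φ ‖z₂‖ / ‖z₂‖) ^ ((1:ℝ)/2) with hψ₂def
  have hψ₂pos : 0 < ψ₂ :=
    Real.rpow_pos_of_pos (div_pos (h.deriv_pos _ hr₂) hr₂) _
  have hV : VPhi Φ z₁ - VPhi Φ z₂ = ψ₁ • z₁ - ψ₂ • z₂ := rfl
  apply Vdiff_real h hr₁ hr₂ hord (norm_nonneg _) _ (norm_nonneg _)
  · -- triangle bound
    rw [hV]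
    calc ‖ψ₁ • z₁ - ψ₂ • z₂‖ ≤ ‖ψ₁ • z₁‖ + ‖ψ₂ • z₂‖ := norm_sub_le _ _
    _ ≤ ψ₁ * ‖z₁‖ + ψ₂ * ‖z₂‖ := by
        rw [norm_smul, norm_smul, Real.norm_eq_abs, Real.norm_eq_abs]
        have h1 : |ψ₁| = ψ₁ := abs_of_pos
          (Real.rpow_pos_of_pos (div_pos (h.deriv_pos _ hr₁) hr₁) _)
        have h2 : |ψ₂| = ψ₂ := abs_of_pos hψ₂pos
        rw [h1, h2]
  · -- split bound
    have hsplit : VPhi Φ z₁ - VPhi Φ z₂ = (ψ₁ - ψ₂) • z₁ + ψ₂ • (z₁ - z₂) := by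
      rw [hV, sub_smul, smul_sub]
      abel
    rw [hsplit]
    calc ‖(ψ₁ - ψ₂) • z₁ + ψ₂ • (z₁ - z₂)‖
        ≤ ‖(ψ₁ - ψ₂) • z₁‖ + ‖ψ₂ • (z₁ - z₂)‖ := norm_add_le _ _
    _ = |ψ₁ - ψ₂| * ‖z₁‖ + ψ₂ * ‖z₁ - z₂‖ := by
        rw [norm_smul, norm_smul, Real.norm_eq_abs, Real.norm_eq_abs,
          abs_of_pos hψ₂pos]
  · -- the remaining side condition ‖z₁‖ - ‖z₂‖ ≤ ‖z₁ - z₂‖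
    exact le_trans (norm_sub_norm_le z₁ z₂) (le_refl _)

/-- Step D, symmetric version. -/
lemma Vdiff {n : ℕ} {Φ : ℝ → ℝ} {s : ℝ} (h : IsNFunction Φ s)
    (z₁ z₂ : EuclideanSpace ℝ (Fin n)) (h₁ : z₁ ≠ 0) (h₂ : z₂ ≠ 0) :
    ‖VPhi Φ z₁ - VPhi Φ z₂‖ ^ 2 ≤
      ((16 * s + 2) ^ 2 * (2:ℝ) ^ s + 36) *
        (deriv Φ (‖z₁‖ + ‖z₂‖) / (‖z₁‖ + ‖z₂‖)) * ‖z₂ - z₁‖ ^ 2 := by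
  rcases le_total ‖z₂‖ ‖z₁‖ with hc | hc
  · have := Vdiff_aux h z₁ z₂ h₁ h₂ hc
    rwa [norm_sub_rev z₁ z₂] at this
  · have := Vdiff_aux h z₂ z₁ h₂ h₁ hc
    rwa [norm_sub_rev (VPhi Φ z₂), add_comm ‖z₂‖] at this

/-- Mean value inequality: if `q' = Hq ≥ m` on `(a,b)` then `m (b-a) ≤ q b - q a`. -/
lemma mvt_ge {q Hq : ℝ → ℝ} {a b m : ℝ} (hab : a < b)
    (hq : ∀ t ∈ Icc a b, HasDerivAt q (Hq t) t)
    (hm : ∀ t ∈ Ioo a b, m ≤ Hq t) :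
    m * (b - a) ≤ q b - q a := by
  obtain ⟨c, hc, hceq⟩ := exists_deriv_eq_slope q hab
    (fun t ht => (hq t ht).continuousAt.continuousWithinAt)
    (fun t ht => ((hq t (Ioo_subset_Icc_self ht)).differentiableAt).differentiableWithinAt)
  have hd : deriv q c = Hq c := (hq c (Ioo_subset_Icc_self hc)).deriv
  have h1 : m ≤ (q b - q a) / (b - a) := by
    rw [← hceq, hd]; exact hm c hc
  rw [le_div_iff₀ (by linarith : (0:ℝ) < b - a)] at h1
  linarith [h1]

/-- One-dimensional second-order Taylor lower bound, via repeated MVT. -/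
lemma taylor_lower {g p H : ℝ → ℝ} {m₀ : ℝ}
    (hg : ∀ t ∈ Icc (0:ℝ) 1, HasDerivAt g (p t) t)
    (hp : ∀ t ∈ Icc (0:ℝ) 1, HasDerivAt p (H t) t)
    (hH0 : ∀ t ∈ Icc (0:ℝ) 1, 0 ≤ H t)
    (hm : 0 ≤ m₀)
    (hcase : (∀ t ∈ Icc (0:ℝ) (1/4), m₀ ≤ H t) ∨ (∀ t ∈ Icc (3/4:ℝ) (7/8), m₀ ≤ H t)) :
    m₀ / 64 ≤ g 1 - g 0 - p 0 := by
  have hpmono : ∀ a b : ℝ, 0 ≤ a → a ≤ b → b ≤ 1 → p a ≤ p b := by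
    intro a b ha hab hb
    rcases eq_or_lt_of_le hab with rfl | hlt
    · exact le_refl _
    · have := mvt_ge hlt
        (fun t ht => hp t ⟨le_trans ha ht.1, le_trans ht.2 hb⟩)
        (fun t ht => hH0 t ⟨le_trans ha ht.1.le, le_trans ht.2.le hb⟩)
      simpa using this
  rcases hcase with hA | hB
  · -- good interval [0, 1/4]
    have h1 : m₀ * (1/4 - 0) ≤ p (1/4) - p 0 := by
      apply mvt_ge (by norm_num)
        (fun t ht => hp t ⟨ht.1, by linarith [ht.2]⟩)
        (fun t ht => hA t ⟨ht.1.le, ht.2.le⟩)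
    have h2 : p 0 * (1/4 - 0) ≤ g (1/4) - g 0 := by
      apply mvt_ge (by norm_num)
        (fun t ht => hg t ⟨ht.1, by linarith [ht.2]⟩)
        (fun t ht => hpmono 0 t (le_refl _) ht.1.le (by linarith [ht.2]))
    have h3 : (p 0 + m₀ / 4) * (1 - 1/4) ≤ g 1 - g (1/4) := by
      apply mvt_ge (by norm_num)
        (fun t ht => hg t ⟨by linarith [ht.1], ht.2⟩)
        (fun t ht => by
          have e1 : p (1/4) ≤ p t := hpmono (1/4) t (by norm_num) ht.1.le ht.2.le
          linarith [h1])
    nlinarith [h2, h3]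
  · -- good interval [3/4, 7/8]
    have h1 : m₀ * (7/8 - 3/4) ≤ p (7/8) - p (3/4) := by
      apply mvt_ge (by norm_num)
        (fun t ht => hp t ⟨by linarith [ht.1], by linarith [ht.2]⟩)
        (fun t ht => hB t ⟨ht.1.le, ht.2.le⟩)
    have h0 : p 0 ≤ p (3/4) := hpmono 0 (3/4) (le_refl _) (by norm_num) (by norm_num)
    have h2 : p 0 * (7/8 - 0) ≤ g (7/8) - g 0 := by
      apply mvt_ge (by norm_num)
        (fun t ht => hg t ⟨ht.1, by linarith [ht.2]⟩)
        (fun t ht => hpmono 0 t (le_refl _) ht.1.le (by linarith [ht.2]))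
    have h3 : (p 0 + m₀ / 8) * (1 - 7/8) ≤ g 1 - g (7/8) := by
      apply mvt_ge (by norm_num)
        (fun t ht => hg t ⟨by linarith [ht.1], ht.2⟩)
        (fun t ht => by
          have e1 : p (7/8) ≤ p t := hpmono (7/8) t (by norm_num) ht.1.le ht.2.le
          linarith [h1, h0])
    nlinarith [h2, h3]

namespace IsNFunction
variable {Φ : ℝ → ℝ} {s : ℝ}

lemma four_rpow (s : ℝ) : (4:ℝ) ^ s = ((2:ℝ) ^ s) ^ 2 := by
  rw [show (4:ℝ) = 2 ^ (2:ℕ) by norm_num, ← Real.rpow_natCast (2:ℝ) 2,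
    ← Real.rpow_natCast ((2:ℝ) ^ s) 2, ← Real.rpow_mul (by norm_num : (0:ℝ) ≤ 2),
    ← Real.rpow_mul (by norm_num : (0:ℝ) ≤ 2)]
  ring_nf

/-- lower bound for `Φ(r)/r²` in terms of `Φ'(M)/M` when `M/4 ≤ r ≤ M`. -/
lemma phi_low (h : IsNFunction Φ s) {r M : ℝ} (hr : 0 < r) (hrM : r ≤ M)
    (hMr : M ≤ 4 * r) :
    deriv Φ M / M / (2 * ((2:ℝ) ^ s) ^ 3) ≤ Φ r / r ^ 2 := by
  have hs0 : (0:ℝ) < s := lt_of_lt_of_le one_pos h.s_ge_one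
  set B := (2:ℝ) ^ s with hBdef
  have hB : (0:ℝ) < B := Real.rpow_pos_of_pos two_pos s
  have hM : 0 < M := lt_of_lt_of_le hr hrM
  have hΦr : 0 ≤ Φ r := h.nonneg r hr.le
  have hdr : 0 < deriv Φ r := h.deriv_pos r hr
  -- Φ' M ≤ B² Φ' r
  have e2 : deriv Φ M ≤ B ^ 2 * deriv Φ r := by
    have hrat := h.deriv_ratio hr hrM
    have hb : (M / r : ℝ) ^ s ≤ (4:ℝ) ^ s := by
      apply Real.rpow_le_rpow (by positivity) _ hs0.le
      rw [div_le_iff₀ hr]; linarith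
    rw [four_rpow s, ← hBdef] at hb
    calc deriv Φ M ≤ (M / r) ^ s * deriv Φ r := hrat
    _ ≤ B ^ 2 * deriv Φ r := mul_le_mul_of_nonneg_right hb hdr.le
  -- Φ' r * r ≤ 2 B Φ r
  have e1 : deriv Φ r * r ≤ 2 * B * Φ r := by
    have := h.phi_ge hr
    have hBne : B ≠ 0 := ne_of_gt hB
    rw [div_mul_eq_mul_div, ← hBdef] at this
    have e1' := mul_le_mul_of_nonneg_left this (by positivity : (0:ℝ) ≤ 2 * B)
    have e1'' : 2 * B * (r * (B⁻¹ * deriv Φ r) / 2) = deriv Φ r * r := by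
      field_simp
    linarith [e1' , e1''.symm ▸ e1']
  -- combine
  have key : deriv Φ M * r ≤ 2 * B ^ 3 * Φ r := by
    have k1 : deriv Φ M * r ≤ B ^ 2 * (deriv Φ r * r) := by
      calc deriv Φ M * r ≤ (B ^ 2 * deriv Φ r) * r :=
        mul_le_mul_of_nonneg_right e2 hr.le
      _ = B ^ 2 * (deriv Φ r * r) := by ring
    have k2 : B ^ 2 * (deriv Φ r * r) ≤ B ^ 2 * (2 * B * Φ r) :=
      mul_le_mul_of_nonneg_left e1 (by positivity)
    calc deriv Φ M * r ≤ B ^ 2 * (2 * B * Φ r) := le_trans k1 k2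
    _ = 2 * B ^ 3 * Φ r := by ring
  rw [div_le_div_iff₀ (by positivity) (by positivity), div_mul_eq_mul_div,
    div_le_iff₀ hM]
  calc deriv Φ M * r ^ 2 = (deriv Φ M * r) * r := by ring
  _ ≤ (2 * B ^ 3 * Φ r) * r := mul_le_mul_of_nonneg_right key hr.le
  _ ≤ (2 * B ^ 3 * Φ r) * M := mul_le_mul_of_nonneg_left hrM (by positivity)
  _ = Φ r * (2 * B ^ 3) * M := by ring

end IsNFunction

lemma fderiv_apply_eq_inner {n : ℕ} (f : EuclideanSpace ℝ (Fin n) → ℝ)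
    (z ξ : EuclideanSpace ℝ (Fin n)) :
    (fderiv ℝ f z) ξ = ⟪gradient f z, ξ⟫ := by
  conv_lhs => rw [← (InnerProductSpace.toDual ℝ
    (EuclideanSpace ℝ (Fin n))).apply_symm_apply (fderiv ℝ f z)]
  rw [show (InnerProductSpace.toDual ℝ (EuclideanSpace ℝ (Fin n))).symm (fderiv ℝ f z)
    = gradient f z from rfl, InnerProductSpace.toDual_apply_apply]

set_option maxHeartbeats 1000000 in
lemma core_segment {n : ℕ} {Φ : ℝ → ℝ} {s ν : ℝ} (h : IsNFunction Φ s) (hν : 0 < ν)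
    (f : EuclideanSpace ℝ (Fin n) → ℝ)
    (hf : ContDiffOn ℝ 2 f {z : EuclideanSpace ℝ (Fin n) | z ≠ 0})
    (hell : ∀ z : EuclideanSpace ℝ (Fin n), z ≠ 0 → ∀ ξ,
      ν * (Φ ‖z‖ / ‖z‖ ^ 2) * ‖ξ‖ ^ 2 ≤ ⟪(fderiv ℝ (gradient f) z) ξ, ξ⟫)
    (z₁ z₂ : EuclideanSpace ℝ (Fin n)) (h₁ : z₁ ≠ 0) (h₂ : z₂ ≠ 0)
    (hseg : ∀ t ∈ Icc (0:ℝ) 1, z₁ + t • (z₂ - z₁) ≠ 0) :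
    ν / (128 * ((2:ℝ) ^ s) ^ 3) * (deriv Φ (‖z₁‖ + ‖z₂‖) / (‖z₁‖ + ‖z₂‖)) * ‖z₂ - z₁‖ ^ 2
      ≤ f z₂ - f z₁ - ⟪gradient f z₁, z₂ - z₁⟫ := by
  classical
  set U : Set (EuclideanSpace ℝ (Fin n)) := {z : EuclideanSpace ℝ (Fin n) | z ≠ 0}
    with hUdef
  have hU : IsOpen U := isOpen_ne
  have hfd : ∀ z : EuclideanSpace ℝ (Fin n), z ≠ 0 → DifferentiableAt ℝ f z := fun z hz =>
    (hf.differentiableOn (by norm_num)).differentiableAt (hU.mem_nhds hz)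
  have hfderC : ContDiffOn ℝ 1 (fderiv ℝ f) U :=
    hf.fderiv_of_isOpen (m := 1) hU (by norm_num)
  have hGC : ContDiffOn ℝ 1 (gradient f) U := by
    have : gradient f = fun z =>
        (InnerProductSpace.toDual ℝ (EuclideanSpace ℝ (Fin n))).symm (fderiv ℝ f z) := rfl
    rw [this]
    exact ((InnerProductSpace.toDual ℝ
      (EuclideanSpace ℝ (Fin n))).symm.contDiff).comp_contDiffOn hfderC
  have hGd : ∀ z : EuclideanSpace ℝ (Fin n), z ≠ 0 →
      DifferentiableAt ℝ (gradient f) z := fun z hz =>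
    (hGC.differentiableOn one_ne_zero).differentiableAt (hU.mem_nhds hz)
  set v := z₂ - z₁ with hvdef
  set γ : ℝ → EuclideanSpace ℝ (Fin n) := fun t => z₁ + t • v with hγdef
  have hγd : ∀ t : ℝ, HasDerivAt γ v t := by
    intro t
    have := ((hasDerivAt_id t).smul_const v).const_add z₁
    rw [one_smul] at this
    exact this
  set D := ‖v‖ with hDdef
  set r₁ := ‖z₁‖ with hr₁def
  set r₂ := ‖z₂‖ with hr₂def
  have hr₁ : 0 < r₁ := norm_pos_iff.2 h₁
  have hr₂ : 0 < r₂ := norm_pos_iff.2 h₂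
  set M := r₁ + r₂ with hMdef
  have hM : 0 < M := by positivity
  have hdM : 0 < deriv Φ M := h.deriv_pos M hM
  set A := deriv Φ M / M with hAdef
  have hA : 0 < A := div_pos hdM hM
  set B := (2:ℝ) ^ s with hBdef
  have hB : (0:ℝ) < B := Real.rpow_pos_of_pos two_pos s
  have hDM : D ≤ M := by
    calc D = ‖z₂ - z₁‖ := rfl
    _ ≤ ‖z₂‖ + ‖z₁‖ := norm_sub_le _ _
    _ = M := by rw [hMdef]; ring
  -- upper bound for ‖γ t‖
  have hrup : ∀ t : ℝ, 0 ≤ t → t ≤ 1 → ‖γ t‖ ≤ M := by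
    intro t ht0 ht1
    have hid : γ t = (1 - t) • z₁ + t • z₂ := by
      simp only [hγdef, hvdef, smul_sub, sub_smul, one_smul]
      abel
    rw [hid]
    calc ‖(1 - t) • z₁ + t • z₂‖ ≤ ‖(1 - t) • z₁‖ + ‖t • z₂‖ := norm_add_le _ _
    _ = (1 - t) * r₁ + t * r₂ := by
        rw [norm_smul, norm_smul, Real.norm_eq_abs, Real.norm_eq_abs,
          abs_of_nonneg (by linarith), abs_of_nonneg ht0]
    _ ≤ M := by
        rw [hMdef]
        nlinarith [hr₁.le, hr₂.le]
  set p : ℝ → ℝ := fun t => ⟪v, gradient f (γ t)⟫ with hpdef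
  set H : ℝ → ℝ := fun t => ⟪v, (fderiv ℝ (gradient f) (γ t)) v⟫ with hHdef
  have hg : ∀ t ∈ Icc (0:ℝ) 1, HasDerivAt (fun t => f (γ t)) (p t) t := by
    intro t ht
    have h1 : HasDerivAt (fun t => f (γ t)) ((fderiv ℝ f (γ t)) v) t :=
      ((hfd _ (hseg t ht)).hasFDerivAt).comp_hasDerivAt t (hγd t)
    have h2 : (fderiv ℝ f (γ t)) v = p t := by
      rw [fderiv_apply_eq_inner, hpdef]
      exact real_inner_comm _ _
    rwa [h2] at h1
  have hp : ∀ t ∈ Icc (0:ℝ) 1, HasDerivAt p (H t) t := by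
    intro t ht
    have hGγ : HasDerivAt (fun t => gradient f (γ t))
        ((fderiv ℝ (gradient f) (γ t)) v) t := by
      have hF := (hGd (γ t) (hseg t ht)).hasFDerivAt
      exact hF.comp_hasDerivAt t (hγd t)
    have := ((innerSL ℝ v).hasFDerivAt).comp_hasDerivAt t hGγ
    exact this
  have hHm : ∀ t ∈ Icc (0:ℝ) 1, ν * (Φ ‖γ t‖ / ‖γ t‖ ^ 2) * D ^ 2 ≤ H t := by
    intro t ht
    have e := hell (γ t) (hseg t ht) v
    calc ν * (Φ ‖γ t‖ / ‖γ t‖ ^ 2) * D ^ 2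
        = ν * (Φ ‖γ t‖ / ‖γ t‖ ^ 2) * ‖v‖ ^ 2 := rfl
    _ ≤ ⟪(fderiv ℝ (gradient f) (γ t)) v, v⟫ := e
    _ = H t := real_inner_comm _ _
  have hH0 : ∀ t ∈ Icc (0:ℝ) 1, 0 ≤ H t := by
    intro t ht
    have hγ0 : 0 < ‖γ t‖ := norm_pos_iff.2 (hseg t ht)
    have hΦ0 := h.nonneg ‖γ t‖ hγ0.le
    exact le_trans (by positivity) (hHm t ht)
  set m₀ := ν / (2 * B ^ 3) * A * D ^ 2 with hm₀def
  have hm₀ : 0 ≤ m₀ := by positivity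
  -- on any t with M/4 ≤ ‖γ t‖ ≤ M we have m₀ ≤ H t
  have hgood : ∀ t ∈ Icc (0:ℝ) 1, M ≤ 4 * ‖γ t‖ → m₀ ≤ H t := by
    intro t ht hlow
    have hγpos : 0 < ‖γ t‖ := norm_pos_iff.2 (hseg t ht)
    have hup : ‖γ t‖ ≤ M := hrup t ht.1 ht.2
    have hphi := h.phi_low hγpos hup hlow
    have e1 : ν / (2 * B ^ 3) * A * D ^ 2 ≤ ν * (Φ ‖γ t‖ / ‖γ t‖ ^ 2) * D ^ 2 := by
      have e2 : A / (2 * B ^ 3) ≤ Φ ‖γ t‖ / ‖γ t‖ ^ 2 := by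
        rw [hAdef]; exact hphi
      have e3 : ν / (2 * B ^ 3) * A = ν * (A / (2 * B ^ 3)) := by ring
      rw [e3]
      apply mul_le_mul_of_nonneg_right _ (by positivity)
      exact mul_le_mul_of_nonneg_left e2 hν.le
    exact le_trans e1 (hHm t ht)
  -- case analysis on which endpoint carries at least half of M
  have hcase : (∀ t ∈ Icc (0:ℝ) (1/4), m₀ ≤ H t) ∨
      (∀ t ∈ Icc (3/4:ℝ) (7/8), m₀ ≤ H t) := by
    rcases le_total r₂ r₁ with hord | hord
    · left
      intro t ht
      have ht01 : t ∈ Icc (0:ℝ) 1 := ⟨ht.1, by linarith [ht.2]⟩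
      apply hgood t ht01
      -- r₁ ≤ ‖γ t‖ + t * D
      have hz₁ : r₁ ≤ ‖γ t‖ + t * D := by
        have hidd : z₁ = γ t - t • v := by simp [hγdef]
        calc r₁ = ‖γ t - t • v‖ := by rw [← hidd]
        _ ≤ ‖γ t‖ + ‖t • v‖ := norm_sub_le _ _
        _ = ‖γ t‖ + t * D := by
            rw [norm_smul, Real.norm_eq_abs, abs_of_nonneg ht.1]
      have hr₁half : M ≤ 2 * r₁ := by rw [hMdef]; linarith
      have htD : t * D ≤ M / 4 := by
        calc t * D ≤ (1/4) * M :=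
          mul_le_mul ht.2 hDM (norm_nonneg _) (by norm_num)
        _ = M / 4 := by ring
      linarith
    · right
      intro t ht
      have ht01 : t ∈ Icc (0:ℝ) 1 := ⟨by linarith [ht.1], by linarith [ht.2]⟩
      apply hgood t ht01
      have hz₂ : r₂ ≤ ‖γ t‖ + (1 - t) * D := by
        have hidd : z₂ = γ t + (1 - t) • v := by
          simp only [hγdef, hvdef, sub_smul, one_smul, smul_sub]
          abel
        calc r₂ = ‖γ t + (1 - t) • v‖ := by rw [← hidd]
        _ ≤ ‖γ t‖ + ‖(1 - t) • v‖ := norm_add_le _ _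
        _ = ‖γ t‖ + (1 - t) * D := by
            rw [norm_smul, Real.norm_eq_abs, abs_of_nonneg (by linarith [ht.2])]
      have hr₂half : M ≤ 2 * r₂ := by rw [hMdef]; linarith
      have htD : (1 - t) * D ≤ M / 4 := by
        calc (1 - t) * D ≤ (1/4) * M :=
          mul_le_mul (by linarith [ht.1]) hDM (norm_nonneg _) (by norm_num)
        _ = M / 4 := by ring
      linarith
  have hmain := taylor_lower hg hp hH0 hm₀ hcase
  have hγ1 : γ 1 = z₂ := by simp [hγdef, hvdef]
  have hγ0 : γ 0 = z₁ := by simp [hγdef]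
  have hp0 : p 0 = ⟪gradient f z₁, z₂ - z₁⟫ := by
    rw [hpdef]
    simp only [hγ0]
    rw [real_inner_comm]
  rw [hγ1, hγ0, hp0] at hmain
  have hfin : ν / (128 * B ^ 3) * A * D ^ 2 = m₀ / 64 := by
    rw [hm₀def]; ring
  calc ν / (128 * B ^ 3) * A * D ^ 2 = m₀ / 64 := hfin
  _ ≤ f z₂ - f z₁ - ⟪gradient f z₁, z₂ - z₁⟫ := hmain

/-- The constant for a single phase. -/
noncomputable def cPhi (s ν : ℝ) : ℝ :=
  ((16 * s + 2) ^ 2 * (2:ℝ) ^ s + 36) * 128 * ((2:ℝ) ^ s) ^ 3 / ν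

lemma cPhi_pos {s ν : ℝ} (hs : 1 ≤ s) (hν : 0 < ν) : 0 < cPhi s ν := by
  have hs0 : (0:ℝ) < s := lt_of_lt_of_le one_pos hs
  have h2 : (0:ℝ) < (2:ℝ) ^ s := Real.rpow_pos_of_pos two_pos s
  unfold cPhi
  positivity

set_option maxHeartbeats 1000000 in
lemma core_chain {n : ℕ} {Φ : ℝ → ℝ} {s ν : ℝ} (h : IsNFunction Φ s) (hν : 0 < ν)
    (f : EuclideanSpace ℝ (Fin n) → ℝ)
    (hf : ContDiffOn ℝ 2 f {z : EuclideanSpace ℝ (Fin n) | z ≠ 0})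
    (hell : ∀ z : EuclideanSpace ℝ (Fin n), z ≠ 0 → ∀ ξ,
      ν * (Φ ‖z‖ / ‖z‖ ^ 2) * ‖ξ‖ ^ 2 ≤ ⟪(fderiv ℝ (gradient f) z) ξ, ξ⟫)
    (z₁ z₂ : EuclideanSpace ℝ (Fin n)) (h₁ : z₁ ≠ 0) (h₂ : z₂ ≠ 0)
    (hseg : ∀ t ∈ Icc (0:ℝ) 1, z₁ + t • (z₂ - z₁) ≠ 0) :
    ‖VPhi Φ z₁ - VPhi Φ z₂‖ ^ 2
      ≤ cPhi s ν * (f z₂ - f z₁ - ⟪gradient f z₁, z₂ - z₁⟫) := by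
  have hs0 : (0:ℝ) < s := lt_of_lt_of_le one_pos h.s_ge_one
  have hB : (0:ℝ) < (2:ℝ) ^ s := Real.rpow_pos_of_pos two_pos s
  set A := deriv Φ (‖z₁‖ + ‖z₂‖) / (‖z₁‖ + ‖z₂‖) with hAdef
  have hM : (0:ℝ) < ‖z₁‖ + ‖z₂‖ := by
    have := norm_pos_iff.2 h₁
    have := norm_nonneg z₂
    linarith
  have hA : 0 < A := div_pos (h.deriv_pos _ hM) hM
  set CV := (16 * s + 2) ^ 2 * (2:ℝ) ^ s + 36 with hCVdef
  have hCV : 0 < CV := by positivity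
  have h1 := Vdiff h z₁ z₂ h₁ h₂
  have h2 := core_segment h hν f hf hell z₁ z₂ h₁ h₂ hseg
  set R := f z₂ - f z₁ - ⟪gradient f z₁, z₂ - z₁⟫ with hRdef
  -- from h2 : ν / (128 B³) * A * D² ≤ R
  have hAD : A * ‖z₂ - z₁‖ ^ 2 ≤ 128 * ((2:ℝ) ^ s) ^ 3 / ν * R := by
    have hc : (0:ℝ) < ν / (128 * ((2:ℝ) ^ s) ^ 3) := by positivity
    have e1 := mul_le_mul_of_nonneg_left h2 (le_of_lt (by positivity :
      (0:ℝ) < 128 * ((2:ℝ) ^ s) ^ 3 / ν))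
    have e2 : 128 * ((2:ℝ) ^ s) ^ 3 / ν *
        (ν / (128 * ((2:ℝ) ^ s) ^ 3) * A * ‖z₂ - z₁‖ ^ 2) = A * ‖z₂ - z₁‖ ^ 2 := by
      field_simp
    linarith [e2 ▸ e1]
  calc ‖VPhi Φ z₁ - VPhi Φ z₂‖ ^ 2 ≤ CV * A * ‖z₂ - z₁‖ ^ 2 := h1
  _ = CV * (A * ‖z₂ - z₁‖ ^ 2) := by ring
  _ ≤ CV * (128 * ((2:ℝ) ^ s) ^ 3 / ν * R) := mul_le_mul_of_nonneg_left hAD hCV.le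
  _ = cPhi s ν * R := by rw [hCVdef]; unfold cPhi; ring

set_option maxHeartbeats 1000000 in
/-- Single-phase main estimate, all nonzero `z₁ z₂`. -/
lemma core_all {n : ℕ} (hn : 2 ≤ n) {Φ : ℝ → ℝ} {s ν : ℝ}
    (h : IsNFunction Φ s) (hν : 0 < ν)
    (f : EuclideanSpace ℝ (Fin n) → ℝ)
    (hf : ContDiffOn ℝ 2 f {z : EuclideanSpace ℝ (Fin n) | z ≠ 0})
    (hell : ∀ z : EuclideanSpace ℝ (Fin n), z ≠ 0 → ∀ ξ,
      ν * (Φ ‖z‖ / ‖z‖ ^ 2) * ‖ξ‖ ^ 2 ≤ ⟪(fderiv ℝ (gradient f) z) ξ, ξ⟫)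
    (z₁ z₂ : EuclideanSpace ℝ (Fin n)) (h₁ : z₁ ≠ 0) (h₂ : z₂ ≠ 0) :
    ‖VPhi Φ z₁ - VPhi Φ z₂‖ ^ 2
      ≤ cPhi s ν * (f z₂ - f z₁ - ⟪gradient f z₁, z₂ - z₁⟫) := by
  by_cases hseg : ∀ t ∈ Icc (0:ℝ) 1, z₁ + t • (z₂ - z₁) ≠ 0
  · exact core_chain h hν f hf hell z₁ z₂ h₁ h₂ hseg
  -- degenerate case: the segment passes through the origin; perturb z₂.
  push_neg at hseg
  obtain ⟨t₀, ht₀, hzero⟩ := hseg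
  -- find w ≠ 0 orthogonal to z₁
  obtain ⟨w, hw_mem, hw0⟩ : ∃ w ∈ (ℝ ∙ z₁)ᗮ, w ≠ (0 : EuclideanSpace ℝ (Fin n)) := by
    apply (Submodule.ne_bot_iff _).1
    intro hbot
    have htop : (ℝ ∙ z₁) = ⊤ := Submodule.orthogonal_eq_bot_iff.1 hbot
    have h1 : Module.finrank ℝ (ℝ ∙ z₁) = 1 := finrank_span_singleton h₁
    have h2 : Module.finrank ℝ (EuclideanSpace ℝ (Fin n)) = n := finrank_euclideanSpace_fin
    rw [htop, finrank_top] at h1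
    rw [h1] at h2
    omega
  have hz₁w : ⟪z₁, w⟫ = 0 :=
    (Submodule.mem_orthogonal _ _).1 hw_mem z₁ (Submodule.mem_span_singleton_self z₁)
  -- z₂ is a multiple of z₁ hence also orthogonal to w
  have ht₀0 : t₀ ≠ 0 := by
    intro h0
    rw [h0] at hzero
    simp at hzero
    exact h₁ hzero
  have hz₂eq : z₂ = (1 - 1 / t₀) • z₁ := by
    have e : z₁ + t₀ • (z₂ - z₁) = 0 := hzero
    have e2 : t₀ • z₂ = (t₀ - 1) • z₁ := by
      rw [smul_sub] at e
      rw [← sub_eq_zero]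
      have h' : t₀ • z₂ - (t₀ - 1) • z₁ = z₁ + (t₀ • z₂ - t₀ • z₁) := by
        rw [sub_smul, one_smul]; abel
      rw [h', e]
    have e3 := congrArg (fun u => t₀⁻¹ • u) e2
    simp only [smul_smul, inv_mul_cancel₀ ht₀0, one_smul] at e3
    rw [e3]
    congr 1
    field_simp
  have hz₂w : ⟪z₂, w⟫ = 0 := by
    rw [hz₂eq, inner_smul_left]
    simp [hz₁w]
  -- perturbed family
  set φ : ℝ → EuclideanSpace ℝ (Fin n) := fun ε => z₂ + ε • w with hφdef
  have hφ0 : φ 0 = z₂ := by simp [hφdef]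
  have hφne : ∀ ε : ℝ, ε ≠ 0 → φ ε ≠ 0 := by
    intro ε hε hc
    have : ⟪φ ε, w⟫ = 0 := by rw [hc]; simp
    rw [hφdef] at this
    simp only [inner_add_left, inner_smul_left, hz₂w, real_inner_self_eq_norm_sq] at this
    have hwpos : 0 < ‖w‖ := norm_pos_iff.2 hw0
    have hw2 : (0:ℝ) < ‖w‖ ^ 2 := by positivity
    simp only [conj_trivial] at this
    have : ε * ‖w‖ ^ 2 = 0 := by linarith
    rcases mul_eq_zero.1 this with h' | h'
    · exact hε h'
    · exact absurd h' (ne_of_gt hw2)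
  have hφseg : ∀ ε : ℝ, ε ≠ 0 → ∀ t ∈ Icc (0:ℝ) 1, z₁ + t • (φ ε - z₁) ≠ 0 := by
    intro ε hε t ht hc
    have hinner : ⟪z₁ + t • (φ ε - z₁), w⟫ = 0 := by rw [hc]; simp
    rw [hφdef] at hinner
    simp only [inner_add_left, inner_smul_left, inner_sub_left, hz₁w, hz₂w,
      real_inner_self_eq_norm_sq, conj_trivial] at hinner
    have hwpos : 0 < ‖w‖ := norm_pos_iff.2 hw0
    have hw2 : (0:ℝ) < ‖w‖ ^ 2 := by positivity
    have ht0 : t = 0 := by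
      have : t * (ε * ‖w‖ ^ 2) = 0 := by linarith
      rcases mul_eq_zero.1 this with h' | h'
      · exact h'
      · rcases mul_eq_zero.1 h' with h'' | h''
        · exact absurd h'' hε
        · exact absurd h'' (ne_of_gt hw2)
    rw [ht0] at hc
    simp at hc
    exact h₁ hc
  -- the inequality for each ε > 0
  have hineq : ∀ ε : ℝ, 0 < ε →
      ‖VPhi Φ z₁ - VPhi Φ (φ ε)‖ ^ 2
        ≤ cPhi s ν * (f (φ ε) - f z₁ - ⟪gradient f z₁, φ ε - z₁⟫) :=
    fun ε hε => core_chain h hν f hf hell z₁ (φ ε) h₁ (hφne ε (ne_of_gt hε))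
      (hφseg ε (ne_of_gt hε))
  -- pass to the limit ε → 0⁺
  have hφcont : Tendsto φ (nhdsWithin 0 (Ioi 0)) (nhds z₂) := by
    have : Continuous φ := by
      rw [hφdef]
      exact continuous_const.add (continuous_id.smul continuous_const)
    rw [← hφ0]
    exact (this.tendsto 0).mono_left nhdsWithin_le_nhds
  have hVcont : ContinuousAt (fun z : EuclideanSpace ℝ (Fin n) => VPhi Φ z) z₂ := by
    have hz₂pos : (0:ℝ) < ‖z₂‖ := norm_pos_iff.2 h₂
    have hnorm : ContinuousAt (fun z : EuclideanSpace ℝ (Fin n) => ‖z‖) z₂ :=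
      continuous_norm.continuousAt
    have hderiv : ContinuousAt (deriv Φ) ‖z₂‖ :=
      (h.cont_deriv.continuousAt (Ioi_mem_nhds hz₂pos))
    have hq : ContinuousAt
        (fun z : EuclideanSpace ℝ (Fin n) => deriv Φ ‖z‖ / ‖z‖) z₂ :=
      ((hderiv.comp hnorm).div hnorm (ne_of_gt hz₂pos))
    have hqpos : 0 < deriv Φ ‖z₂‖ / ‖z₂‖ := div_pos (h.deriv_pos _ hz₂pos) hz₂pos
    have hrpow : ContinuousAt
        (fun z : EuclideanSpace ℝ (Fin n) => (deriv Φ ‖z‖ / ‖z‖) ^ ((1:ℝ)/2)) z₂ :=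
      hq.rpow_const (Or.inl (ne_of_gt hqpos))
    exact hrpow.smul continuousAt_id
  have hfcont : ContinuousAt f z₂ := by
    have hU : IsOpen {z : EuclideanSpace ℝ (Fin n) | z ≠ 0} := isOpen_ne
    exact (hf.continuousOn.continuousAt (hU.mem_nhds h₂))
  -- LHS and RHS limits
  have hT1 : Tendsto (fun ε => ‖VPhi Φ z₁ - VPhi Φ (φ ε)‖ ^ 2)
      (nhdsWithin 0 (Ioi 0)) (nhds (‖VPhi Φ z₁ - VPhi Φ z₂‖ ^ 2)) := by
    apply Tendsto.pow
    apply Tendsto.norm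
    exact tendsto_const_nhds.sub ((hVcont.tendsto).comp hφcont)
  have hT2 : Tendsto (fun ε => cPhi s ν * (f (φ ε) - f z₁ - ⟪gradient f z₁, φ ε - z₁⟫))
      (nhdsWithin 0 (Ioi 0))
      (nhds (cPhi s ν * (f z₂ - f z₁ - ⟪gradient f z₁, z₂ - z₁⟫))) := by
    apply Tendsto.const_mul
    apply Tendsto.sub
    · exact ((hfcont.tendsto).comp hφcont).sub tendsto_const_nhds
    · have hinnercont : ContinuousAt
          (fun z : EuclideanSpace ℝ (Fin n) => ⟪gradient f z₁, z - z₁⟫) z₂ := by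
        apply ContinuousAt.inner continuousAt_const
        exact continuousAt_id.sub continuousAt_const
      exact (hinnercont.tendsto).comp hφcont
  have hev : ∀ᶠ ε in nhdsWithin (0:ℝ) (Ioi 0),
      ‖VPhi Φ z₁ - VPhi Φ (φ ε)‖ ^ 2
        ≤ cPhi s ν * (f (φ ε) - f z₁ - ⟪gradient f z₁, φ ε - z₁⟫) := by
    filter_upwards [self_mem_nhdsWithin] with ε hε
    exact hineq ε hε
  exact le_of_tendsto_of_tendsto hT1 hT2 hev

lemma aux_R {c R X : ℝ} (hc : 0 < c) (hX : 0 ≤ X) (h : X ≤ c * R) : 0 ≤ R := by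
  nlinarith

lemma gradient_combo {n : ℕ} (f₁ f₂ f₃ : EuclideanSpace ℝ (Fin n) → ℝ) (c d : ℝ)
    (z : EuclideanSpace ℝ (Fin n))
    (h1 : DifferentiableAt ℝ f₁ z) (h2 : DifferentiableAt ℝ f₂ z)
    (h3 : DifferentiableAt ℝ f₃ z) :
    gradient (fun z => f₁ z + c * f₂ z + d * f₃ z) z
      = gradient f₁ z + c • gradient f₂ z + d • gradient f₃ z := by
  have hfd : fderiv ℝ (fun z => f₁ z + c * f₂ z + d * f₃ z) z
      = fderiv ℝ f₁ z + c • fderiv ℝ f₂ z + d • fderiv ℝ f₃ z := by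
    have e2 : HasFDerivAt (fun z => c * f₂ z) (c • fderiv ℝ f₂ z) z :=
      h2.hasFDerivAt.const_mul c
    have e3 : HasFDerivAt (fun z => d * f₃ z) (d • fderiv ℝ f₃ z) z :=
      h3.hasFDerivAt.const_mul d
    exact ((h1.hasFDerivAt.add e2).add e3).fderiv
  show (InnerProductSpace.toDual ℝ (EuclideanSpace ℝ (Fin n))).symm
      (fderiv ℝ (fun z => f₁ z + c * f₂ z + d * f₃ z) z) = _
  rw [hfd, map_add, map_add, _root_.map_smul, _root_.map_smul]
  rfl

/-- The modulus of continuity `ω : [0,∞) → [0,∞)` is either `t ↦ min (t^μ) 1` for some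
`μ ∈ (0,1)`, or concave with `ω(0) = 0` and `ω ≤ 1`. -/
def OmegaCond (ω : ℝ → ℝ) : Prop :=
  (∀ t, 0 ≤ t → 0 ≤ ω t) ∧
  ((∃ μ : ℝ, 0 < μ ∧ μ < 1 ∧ ∀ t, 0 ≤ t → ω t = min (t ^ μ) 1) ∨
    (ConcaveOn ℝ (Ici 0) ω ∧ ω 0 = 0 ∧ ∀ t, 0 ≤ t → ω t ≤ 1))

/-- The structure assumptions (sa:2) on the integrand `FΦ` associated to the N-function `Φ`:
`FΦ` is continuous on `Ω × ℝ × ℝⁿ` and `C²` in `z` away from `z = 0`, with growth,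
ellipticity and continuity conditions, for constants `0 < ν ≤ L` and modulus `ω`. Here
`gradient (FΦ x y)` is the gradient in the `z`-variable and its (Fréchet) derivative is the
Hessian in `z`. -/
def StructCond (n : ℕ) (Ω : Set (EuclideanSpace ℝ (Fin n))) (ν L : ℝ) (ω : ℝ → ℝ)
    (Φ : ℝ → ℝ) (FΦ : EuclideanSpace ℝ (Fin n) → ℝ → EuclideanSpace ℝ (Fin n) → ℝ) :
    Prop :=
  ContinuousOn
      (fun p : EuclideanSpace ℝ (Fin n) × ℝ × EuclideanSpace ℝ (Fin n) =>
        FΦ p.1 p.2.1 p.2.2)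
      (Ω ×ˢ (Set.univ : Set (ℝ × EuclideanSpace ℝ (Fin n)))) ∧
  (∀ x ∈ Ω, ∀ y : ℝ, ContDiffOn ℝ 2 (FΦ x y) {z : EuclideanSpace ℝ (Fin n) | z ≠ 0}) ∧
  (∀ x ∈ Ω, ∀ y : ℝ, ∀ z : EuclideanSpace ℝ (Fin n), z ≠ 0 →
    ‖gradient (FΦ x y) z‖ * ‖z‖ + ‖fderiv ℝ (gradient (FΦ x y)) z‖ * ‖z‖ ^ 2
      ≤ L * Φ ‖z‖) ∧
  (∀ x ∈ Ω, ∀ y : ℝ, ∀ z : EuclideanSpace ℝ (Fin n), z ≠ 0 →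
    ∀ ξ : EuclideanSpace ℝ (Fin n),
      ν * (Φ ‖z‖ / ‖z‖ ^ 2) * ‖ξ‖ ^ 2 ≤ ⟪(fderiv ℝ (gradient (FΦ x y)) z) ξ, ξ⟫) ∧
  (∀ x₁ ∈ Ω, ∀ x₂ ∈ Ω, ∀ y : ℝ, ∀ z : EuclideanSpace ℝ (Fin n), z ≠ 0 →
    ‖gradient (FΦ x₁ y) z - gradient (FΦ x₂ y) z‖ * ‖z‖ ≤ L * ω ‖x₁ - x₂‖ * Φ ‖z‖) ∧
  (∀ x ∈ Ω, ∀ y₁ y₂ : ℝ, ∀ z : EuclideanSpace ℝ (Fin n), z ≠ 0 →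
    |FΦ x y₁ z - FΦ x y₂ z| ≤ L * ω |y₁ - y₂| * Φ ‖z‖)

set_option maxHeartbeats 1000000 in
/-- Under the multi-phase structure assumptions there is `c₂ > 0`,
depending only on `n, s(G), s(H_a), s(H_b), ν`, such that
`|V_G(z₁)−V_G(z₂)|² + a(x)|V_{H_a}(z₁)−V_{H_a}(z₂)|² + b(x)|V_{H_b}(z₁)−V_{H_b}(z₂)|²
  + c₂·⟨D_zF(x,y,z₁), z₂ − z₁⟩ ≤ c₂·(F(x,y,z₂) − F(x,y,z₁))` for `x ∈ Ω`, `y ∈ ℝ`,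
`z₁, z₂ ∈ ℝⁿ∖{0}`, where `F = F_G + a·F_{H_a} + b·F_{H_b}`. -/
theorem statement15 (n : ℕ) (hn : 2 ≤ n)
    (sG sHa sHb ν : ℝ) (hsG : 1 ≤ sG) (hsHa : 1 ≤ sHa) (hsHb : 1 ≤ sHb) (hν : 0 < ν) :
    ∃ c₂ : ℝ, 0 < c₂ ∧
      ∀ (Ω : Set (EuclideanSpace ℝ (Fin n))), IsOpen Ω →
      ∀ (G Ha Hb : ℝ → ℝ),
        IsNFunction G sG → IsNFunction Ha sHa → IsNFunction Hb sHb →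
      ∀ (a b : EuclideanSpace ℝ (Fin n) → ℝ),
        (∀ x ∈ Ω, 0 ≤ a x) → (∀ x ∈ Ω, 0 ≤ b x) →
        (∃ M, ∀ x ∈ Ω, a x ≤ M) → (∃ M, ∀ x ∈ Ω, b x ≤ M) →
      ∀ (L : ℝ), ν ≤ L →
      ∀ (ω : ℝ → ℝ), OmegaCond ω →
      ∀ (FG FHa FHb : EuclideanSpace ℝ (Fin n) → ℝ → EuclideanSpace ℝ (Fin n) → ℝ),
        StructCond n Ω ν L ω G FG → StructCond n Ω ν L ω Ha FHa →
        StructCond n Ω ν L ω Hb FHb →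
        (∀ x ∈ Ω, ∀ y : ℝ, ∀ z : EuclideanSpace ℝ (Fin n),
          ν * (G ‖z‖ + a x * Ha ‖z‖ + b x * Hb ‖z‖)
              ≤ FG x y z + a x * FHa x y z + b x * FHb x y z ∧
            FG x y z + a x * FHa x y z + b x * FHb x y z
              ≤ L * (G ‖z‖ + a x * Ha ‖z‖ + b x * Hb ‖z‖)) →
      ∀ x ∈ Ω, ∀ y : ℝ, ∀ z₁ z₂ : EuclideanSpace ℝ (Fin n), z₁ ≠ 0 → z₂ ≠ 0 →
        ‖VPhi G z₁ - VPhi G z₂‖ ^ 2 + a x * ‖VPhi Ha z₁ - VPhi Ha z₂‖ ^ 2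
            + b x * ‖VPhi Hb z₁ - VPhi Hb z₂‖ ^ 2
            + c₂ * ⟪gradient (fun z => FG x y z + a x * FHa x y z + b x * FHb x y z) z₁,
                z₂ - z₁⟫
          ≤ c₂ * ((FG x y z₂ + a x * FHa x y z₂ + b x * FHb x y z₂)
              - (FG x y z₁ + a x * FHa x y z₁ + b x * FHb x y z₁)) := by
  have hcG := cPhi_pos hsG hν
  have hcHa := cPhi_pos hsHa hν
  have hcHb := cPhi_pos hsHb hν
  refine ⟨cPhi sG ν + cPhi sHa ν + cPhi sHb ν, by linarith, ?_⟩
  intro Ω hΩ G Ha Hb hG hHa hHb a b ha hb _ _ L _ ω _ FG FHa FHb hSG hSHa hSHb _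
    x hx y z₁ z₂ hz₁ hz₂
  set c₂ := cPhi sG ν + cPhi sHa ν + cPhi sHb ν with hc₂def
  obtain ⟨_, hC2G, _, hellG, _, _⟩ := hSG
  obtain ⟨_, hC2Ha, _, hellHa, _, _⟩ := hSHa
  obtain ⟨_, hC2Hb, _, hellHb, _, _⟩ := hSHb
  have hax : 0 ≤ a x := ha x hx
  have hbx : 0 ≤ b x := hb x hx
  -- the three single-phase inequalities
  have HG := core_all hn hG hν (FG x y) (hC2G x hx y)
    (fun z hz ξ => hellG x hx y z hz ξ) z₁ z₂ hz₁ hz₂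
  have HHa := core_all hn hHa hν (FHa x y) (hC2Ha x hx y)
    (fun z hz ξ => hellHa x hx y z hz ξ) z₁ z₂ hz₁ hz₂
  have HHb := core_all hn hHb hν (FHb x y) (hC2Hb x hx y)
    (fun z hz ξ => hellHb x hx y z hz ξ) z₁ z₂ hz₁ hz₂
  set RG := FG x y z₂ - FG x y z₁ - ⟪gradient (FG x y) z₁, z₂ - z₁⟫ with hRGdef
  set RHa := FHa x y z₂ - FHa x y z₁ - ⟪gradient (FHa x y) z₁, z₂ - z₁⟫ with hRHadef
  set RHb := FHb x y z₂ - FHb x y z₁ - ⟪gradient (FHb x y) z₁, z₂ - z₁⟫ with hRHbdef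
  have hRG0 : 0 ≤ RG := aux_R hcG (by positivity) HG
  have hRHa0 : 0 ≤ RHa := aux_R hcHa (by positivity) HHa
  have hRHb0 : 0 ≤ RHb := aux_R hcHb (by positivity) HHb
  -- gradient of the combined integrand
  have hU : IsOpen {z : EuclideanSpace ℝ (Fin n) | z ≠ 0} := isOpen_ne
  have hdG : DifferentiableAt ℝ (FG x y) z₁ :=
    ((hC2G x hx y).differentiableOn (by norm_num)).differentiableAt (hU.mem_nhds hz₁)
  have hdHa : DifferentiableAt ℝ (FHa x y) z₁ :=
    ((hC2Ha x hx y).differentiableOn (by norm_num)).differentiableAt (hU.mem_nhds hz₁)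
  have hdHb : DifferentiableAt ℝ (FHb x y) z₁ :=
    ((hC2Hb x hx y).differentiableOn (by norm_num)).differentiableAt (hU.mem_nhds hz₁)
  have hgrad := gradient_combo (FG x y) (FHa x y) (FHb x y) (a x) (b x) z₁
    hdG hdHa hdHb
  have hinner : ⟪gradient (fun z => FG x y z + a x * FHa x y z + b x * FHb x y z) z₁,
      z₂ - z₁⟫
      = ⟪gradient (FG x y) z₁, z₂ - z₁⟫ + a x * ⟪gradient (FHa x y) z₁, z₂ - z₁⟫
        + b x * ⟪gradient (FHb x y) z₁, z₂ - z₁⟫ := by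
    rw [hgrad, inner_add_left, inner_add_left, real_inner_smul_left,
      real_inner_smul_left]
  -- weighted sums
  have w1 : ‖VPhi G z₁ - VPhi G z₂‖ ^ 2 ≤ c₂ * RG := by
    calc ‖VPhi G z₁ - VPhi G z₂‖ ^ 2 ≤ cPhi sG ν * RG := HG
    _ ≤ c₂ * RG := mul_le_mul_of_nonneg_right (by rw [hc₂def]; linarith) hRG0
  have w2 : a x * ‖VPhi Ha z₁ - VPhi Ha z₂‖ ^ 2 ≤ a x * (c₂ * RHa) := by
    apply mul_le_mul_of_nonneg_left _ hax
    calc ‖VPhi Ha z₁ - VPhi Ha z₂‖ ^ 2 ≤ cPhi sHa ν * RHa := HHa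
    _ ≤ c₂ * RHa := mul_le_mul_of_nonneg_right (by rw [hc₂def]; linarith) hRHa0
  have w3 : b x * ‖VPhi Hb z₁ - VPhi Hb z₂‖ ^ 2 ≤ b x * (c₂ * RHb) := by
    apply mul_le_mul_of_nonneg_left _ hbx
    calc ‖VPhi Hb z₁ - VPhi Hb z₂‖ ^ 2 ≤ cPhi sHb ν * RHb := HHb
    _ ≤ c₂ * RHb := mul_le_mul_of_nonneg_right (by rw [hc₂def]; linarith) hRHb0
  -- assemble
  have hsum : ‖VPhi G z₁ - VPhi G z₂‖ ^ 2 + a x * ‖VPhi Ha z₁ - VPhi Ha z₂‖ ^ 2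
      + b x * ‖VPhi Hb z₁ - VPhi Hb z₂‖ ^ 2
      ≤ c₂ * (RG + a x * RHa + b x * RHb) := by
    have e : c₂ * (RG + a x * RHa + b x * RHb)
        = c₂ * RG + a x * (c₂ * RHa) + b x * (c₂ * RHb) := by ring
    rw [e]
    linarith
  have hexpand : RG + a x * RHa + b x * RHb
      = ((FG x y z₂ + a x * FHa x y z₂ + b x * FHb x y z₂)
          - (FG x y z₁ + a x * FHa x y z₁ + b x * FHb x y z₁))
        - ⟪gradient (fun z => FG x y z + a x * FHa x y z + b x * FHb x y z) z₁,
            z₂ - z₁⟫ := by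
    rw [hinner, hRGdef, hRHadef, hRHbdef]
    ring
  rw [hexpand] at hsum
  linarith
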